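/- Fix a query index (a1*, a2*, b*). Every column of the collapsed codebook matrix S^m_q is nonzero: each remaining column has at least 2^m − 1 nonzero entries, and in particular its squared Euclidean norm is either (2^m − 1)/2^m (if its column index has b ≠ b*) or 1 (if its column index has b = b* and a2 ≠ a2*). -/

import Mathlib

/-- Binary vectors of length `m`. -/
abbrev BV (m : ℕ) := Fin m → ZMod 2

/-- Row indices of the sparse Kerdock matrix: pairs `(u1, u2)`. -/
abbrev KRow (m : ℕ) := BV m × BV m

/-- Column indices of the sparse Kerdock matrix: triples `(a1, a2, b)`. -/
abbrev KCol (m : ℕ) := BV m × BV m × BV m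

/-- `P` is a Kerdock set: a family of symmetric binary matrices such that the sum of
any two distinct members is invertible. -/
def IsKerdockSet {m : ℕ} (P : BV m → Matrix (Fin m) (Fin m) (ZMod 2)) : Prop :=
  (∀ b, (P b).IsSymm) ∧ ∀ b b', b ≠ b' → IsUnit (P b + P b')

/-- Entry of the sparse Kerdock matrix `S^m` at row `(u1, u2)` and column `(a1, a2, b)`:
`2^{-m/2} * (-1)^{⟨u1, a1⟩}` if `u1 (P b) + u2 = a2`, and `0` otherwise. -/
noncomputable def kerdockEntry (m : ℕ) (P : BV m → Matrix (Fin m) (Fin m) (ZMod 2))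
    (u : KRow m) (c : KCol m) : ℝ :=
  if Matrix.vecMul u.1 (P c.2.2) + u.2 = c.2.1 then
    (Real.sqrt (2 ^ m))⁻¹ * (-1 : ℝ) ^ ((∑ i, u.1 i * c.1 i).val)
  else 0

lemma bv_add_self {m : ℕ} (x : BV m) : x + x = 0 :=
  funext fun i => CharTwo.add_self_eq_zero (x i)

lemma bv_solve {m : ℕ} {x u2 a2 : BV m} : x + u2 = a2 ↔ u2 = x + a2 := by
  constructor
  · intro h; rw [← h, ← add_assoc, bv_add_self, zero_add]
  · intro h; rw [h, ← add_assoc, bv_add_self, zero_add]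

lemma kerdockEntry_ne_zero_iff {m : ℕ} (P : BV m → Matrix (Fin m) (Fin m) (ZMod 2))
    (u : KRow m) (c : KCol m) :
    kerdockEntry m P u c ≠ 0 ↔ Matrix.vecMul u.1 (P c.2.2) + u.2 = c.2.1 := by
  unfold kerdockEntry
  split
  · next h =>
    simp only [h, iff_true]
    have h1 : (Real.sqrt (2 ^ m)) ≠ 0 := by positivity
    have h2 : ((-1 : ℝ) ^ ((∑ i, u.1 i * c.1 i).val)) ≠ 0 :=
      pow_ne_zero _ (by norm_num)
    positivity
  · next h => simp [h]

lemma kerdockEntry_sq {m : ℕ} (P : BV m → Matrix (Fin m) (Fin m) (ZMod 2))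
    (u : KRow m) (c : KCol m) :
    (kerdockEntry m P u c) ^ 2 =
      if Matrix.vecMul u.1 (P c.2.2) + u.2 = c.2.1 then ((2 : ℝ) ^ m)⁻¹ else 0 := by
  unfold kerdockEntry
  split
  · rw [mul_pow, ← pow_mul, mul_comm _ 2, pow_mul]
    norm_num
  · norm_num

lemma bv_solve' {m : ℕ} {x y z : BV m} : x + y = z ↔ x = z + y := by
  rw [add_comm x y, bv_solve, add_comm y z]

theorem sparse_kerdock_collapsed_columns_nonzero (m : ℕ) (hm : 1 ≤ m)
    (P : BV m → Matrix (Fin m) (Fin m) (ZMod 2)) (hP : IsKerdockSet P)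
    (a1s a2s bs : BV m) (c : KCol m) (hc : ¬(c.2.1 = a2s ∧ c.2.2 = bs)) :
    2 ^ m - 1 ≤ Nat.card {u : KRow m //
        Matrix.vecMul u.1 (P bs) + u.2 ≠ a2s ∧ kerdockEntry m P u c ≠ 0} ∧
    (c.2.2 ≠ bs →
      ∑ u ∈ Finset.univ.filter (fun u : KRow m => Matrix.vecMul u.1 (P bs) + u.2 ≠ a2s),
        (kerdockEntry m P u c) ^ 2 = ((2 : ℝ) ^ m - 1) / 2 ^ m) ∧
    (c.2.2 = bs → c.2.1 ≠ a2s →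
      ∑ u ∈ Finset.univ.filter (fun u : KRow m => Matrix.vecMul u.1 (P bs) + u.2 ≠ a2s),
        (kerdockEntry m P u c) ^ 2 = 1) := by
  classical
  obtain ⟨a1, a2, b⟩ := c
  simp only at hc ⊢
  have hcard : Fintype.card (BV m) = 2 ^ m := by simp
  set A : Finset (KRow m) := Finset.univ.filter (fun u : KRow m =>
    Matrix.vecMul u.1 (P bs) + u.2 ≠ a2s ∧ Matrix.vecMul u.1 (P b) + u.2 = a2) with hAdef
  set T : Finset (BV m) := Finset.univ.filter (fun u1 : BV m =>
    Matrix.vecMul u1 (P bs) + (Matrix.vecMul u1 (P b) + a2) ≠ a2s) with hTdef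
  have hAT : A.card = T.card := by
    apply Finset.card_nbij' (fun u => u.1) (fun u1 => (u1, Matrix.vecMul u1 (P b) + a2))
    · intro u hu
      simp only [Finset.mem_coe, hAdef, Finset.mem_filter, Finset.mem_univ, true_and] at hu
      simp only [Finset.mem_coe, hTdef, Finset.mem_filter, Finset.mem_univ, true_and]
      rw [← bv_solve.mp hu.2]
      exact hu.1
    · intro u1 hu1
      simp only [Finset.mem_coe, hTdef, Finset.mem_filter, Finset.mem_univ, true_and] at hu1
      simp only [Finset.mem_coe, hAdef, Finset.mem_filter, Finset.mem_univ, true_and]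
      exact ⟨hu1, bv_solve.mpr rfl⟩
    · intro u hu
      simp only [Finset.mem_coe, hAdef, Finset.mem_filter, Finset.mem_univ, true_and] at hu
      exact Prod.ext rfl (bv_solve.mp hu.2).symm
    · intro u1 _
      rfl
  have hT1 : b = bs → a2 ≠ a2s → T.card = 2 ^ m := by
    intro hb ha
    have hTu : T = Finset.univ := by
      ext u1
      simp only [hTdef, Finset.mem_filter, Finset.mem_univ, true_and, iff_true]
      rw [hb, ← add_assoc, bv_add_self, zero_add]
      exact ha
    rw [hTu, Finset.card_univ, hcard]
  have hT2 : b ≠ bs → T.card = 2 ^ m - 1 := by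
    intro hb
    have hM : IsUnit (P bs + P b) := hP.2 bs b (fun h => hb h.symm)
    have hMd : IsUnit (P bs + P b).det := (Matrix.isUnit_iff_isUnit_det _).mp hM
    set M := P bs + P b with hMdef
    set v := Matrix.vecMul (a2s + a2) M⁻¹ with hv
    have key : ∀ u1 : BV m,
        (Matrix.vecMul u1 (P bs) + (Matrix.vecMul u1 (P b) + a2) = a2s) ↔ u1 = v := by
      intro u1
      rw [← add_assoc, ← Matrix.vecMul_add, ← hMdef, bv_solve']
      constructor
      · intro h
        rw [hv, ← h, Matrix.vecMul_vecMul, Matrix.mul_nonsing_inv _ hMd, Matrix.vecMul_one]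
      · intro h
        rw [h, hv, Matrix.vecMul_vecMul, Matrix.nonsing_inv_mul _ hMd, Matrix.vecMul_one]
    have hTv : T = Finset.univ.erase v := by
      rw [hTdef, ← Finset.filter_ne']
      apply Finset.filter_congr
      intro u1 _
      simp [key u1]
    rw [hTv, Finset.card_erase_of_mem (Finset.mem_univ v), Finset.card_univ, hcard]
  -- identify the Nat.card with A.card
  have hNat : Nat.card {u : KRow m //
      Matrix.vecMul u.1 (P bs) + u.2 ≠ a2s ∧ kerdockEntry m P u (a1, a2, b) ≠ 0} = A.card := by
    rw [Nat.card_congr (Equiv.subtypeEquivRight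
      (q := fun u : KRow m =>
        Matrix.vecMul u.1 (P bs) + u.2 ≠ a2s ∧ Matrix.vecMul u.1 (P b) + u.2 = a2)
      (fun u => by rw [kerdockEntry_ne_zero_iff]))]
    rw [Nat.card_eq_fintype_card, Fintype.card_subtype]
  -- identify the sums
  have hsum : ∑ u ∈ Finset.univ.filter
        (fun u : KRow m => Matrix.vecMul u.1 (P bs) + u.2 ≠ a2s),
      (kerdockEntry m P u (a1, a2, b)) ^ 2 = (A.card : ℝ) * ((2 : ℝ) ^ m)⁻¹ := by
    simp_rw [kerdockEntry_sq]
    rw [Finset.sum_ite, Finset.sum_const_zero, add_zero, Finset.sum_const,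
      Finset.filter_filter, nsmul_eq_mul]
  refine ⟨?_, ?_, ?_⟩
  · rw [hNat, hAT]
    by_cases hb : b = bs
    · rw [hT1 hb (fun h => hc ⟨h, hb⟩)]
      omega
    · rw [hT2 hb]
  · intro hb
    rw [hsum, hAT, hT2 hb, Nat.cast_sub Nat.one_le_two_pow]
    push_cast
    rw [div_eq_mul_inv]
  · intro hb ha
    rw [hsum, hAT, hT1 hb ha]
    push_cast
    rw [mul_inv_cancel₀ (by positivity)]
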